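/- Any linear map between commutative †-Frobenius monoids preserving all of the Frobenius structure is unitary: if (H, m_H, u_H) and (K, m_K, u_K) are commutative †-Frobenius monoids and f : H → K is a linear map satisfying f ∘ m_H = m_K ∘ (f ⊗ f), f(u_H(1)) = u_K(1), δ_K ∘ f = (f ⊗ f) ∘ δ_H, and ε_K ∘ f = ε_H, then f† ∘ f = id_H and f ∘ f† = id_K. -/

import Mathlib

noncomputable section

open scoped TensorProduct ComplexConjugate InnerProductSpace

open scoped TensorProduct ComplexConjugate InnerProductSpace

variable {H : Type*} [NormedAddCommGroup H] [InnerProductSpace ℂ H] [FiniteDimensional ℂ H]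

namespace TensorIP

variable (H) in
/-- A basis of `H ⊗ H` built from an orthonormal basis of `H`. -/
def tb : Module.Basis (Fin (Module.finrank ℂ H) × Fin (Module.finrank ℂ H)) ℂ (H ⊗[ℂ] H) :=
  Module.Basis.tensorProduct (stdOrthonormalBasis ℂ H).toBasis (stdOrthonormalBasis ℂ H).toBasis

variable (H) in
/-- The canonical inner product space structure on `H ⊗ H`, which is determined by
`⟪a ⊗ b, c ⊗ d⟫ = ⟪a,c⟫ * ⟪b,d⟫` (see `TensorIP.inner_tmul` below). -/
def core : InnerProductSpace.Core ℂ (H ⊗[ℂ] H) where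
  inner x y := ∑ p, conj ((tb H).repr x p) * ((tb H).repr y p)
  conj_inner_symm x y := by
    simp only [map_sum, map_mul, starRingEnd_self_apply]
    exact Finset.sum_congr rfl fun p _ => by ring
  re_inner_nonneg x := by
    show 0 ≤ RCLike.re (∑ p, conj ((tb H).repr x p) * ((tb H).repr x p))
    have h : ∀ p : Fin (Module.finrank ℂ H) × Fin (Module.finrank ℂ H),
        conj ((tb H).repr x p) * ((tb H).repr x p)
          = ((Complex.normSq ((tb H).repr x p) : ℝ) : ℂ) := fun p => by
      rw [mul_comm, Complex.mul_conj]
    simp only [h]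
    rw [map_sum]
    refine Finset.sum_nonneg fun p _ => ?_
    simp [Complex.normSq_nonneg]
  add_left x y z := by
    simp only [map_add, Finsupp.add_apply]
    rw [← Finset.sum_add_distrib]
    exact Finset.sum_congr rfl fun p _ => by ring
  smul_left x y r := by
    simp only [map_smul, Finsupp.smul_apply, smul_eq_mul, map_mul, Finset.mul_sum]
    exact Finset.sum_congr rfl fun p _ => by ring
  definite x hx := by
    have hx' : ∑ p, conj ((tb H).repr x p) * ((tb H).repr x p) = 0 := hx
    have h2 : ∑ p, ((Complex.normSq ((tb H).repr x p) : ℝ) : ℂ) = 0 := by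
      rw [← hx']
      exact Finset.sum_congr rfl fun p _ => by rw [mul_comm, Complex.mul_conj]
    have h3 : ∑ p, Complex.normSq ((tb H).repr x p) = 0 := by exact_mod_cast h2
    have h4 : ∀ p ∈ Finset.univ, Complex.normSq ((tb H).repr x p) = 0 :=
      (Finset.sum_eq_zero_iff_of_nonneg fun p _ => Complex.normSq_nonneg _).mp h3
    have h5 : (tb H).repr x = 0 := by
      ext p
      exact Complex.normSq_eq_zero.mp (h4 p (Finset.mem_univ p))
    simpa using (tb H).repr.map_eq_zero_iff.mp h5

instance : NormedAddCommGroup (H ⊗[ℂ] H) :=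
  @InnerProductSpace.Core.toNormedAddCommGroup ℂ (H ⊗[ℂ] H) _ _ _ (core H)

instance : InnerProductSpace ℂ (H ⊗[ℂ] H) := InnerProductSpace.ofCore (core H).toCore

theorem inner_tmul (a b c d : H) :
    @inner ℂ _ InnerProductSpace.toInner (a ⊗ₜ[ℂ] b) (c ⊗ₜ[ℂ] d) = ⟪a, c⟫_ℂ * ⟪b, d⟫_ℂ := by
  have key : ∀ (x y : H) (p : Fin (Module.finrank ℂ H) × Fin (Module.finrank ℂ H)),
      (tb H).repr (x ⊗ₜ[ℂ] y) p
        = ⟪(stdOrthonormalBasis ℂ H) p.1, x⟫_ℂ * ⟪(stdOrthonormalBasis ℂ H) p.2, y⟫_ℂ := by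
    rintro x y ⟨i, j⟩
    rw [tb, Module.Basis.tensorProduct_repr_tmul_apply, smul_eq_mul,
      OrthonormalBasis.coe_toBasis_repr_apply, OrthonormalBasis.coe_toBasis_repr_apply,
      OrthonormalBasis.repr_apply_apply, OrthonormalBasis.repr_apply_apply, mul_comm]
  show (∑ p, conj ((tb H).repr (a ⊗ₜ[ℂ] b) p) * ((tb H).repr (c ⊗ₜ[ℂ] d) p)) = _
  simp only [key, map_mul]
  rw [← Finset.univ_product_univ, Finset.sum_product]
  have h : ∀ i j : Fin (Module.finrank ℂ H),
      (conj ⟪(stdOrthonormalBasis ℂ H) i, a⟫_ℂ * conj ⟪(stdOrthonormalBasis ℂ H) j, b⟫_ℂ) *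
        (⟪(stdOrthonormalBasis ℂ H) i, c⟫_ℂ * ⟪(stdOrthonormalBasis ℂ H) j, d⟫_ℂ)
      = (⟪a, (stdOrthonormalBasis ℂ H) i⟫_ℂ * ⟪(stdOrthonormalBasis ℂ H) i, c⟫_ℂ) *
        (⟪b, (stdOrthonormalBasis ℂ H) j⟫_ℂ * ⟪(stdOrthonormalBasis ℂ H) j, d⟫_ℂ) := by
    intro i j
    rw [inner_conj_symm, inner_conj_symm]; ring
  simp only [h]
  rw [← Finset.sum_mul_sum]
  rw [OrthonormalBasis.sum_inner_mul_inner, OrthonormalBasis.sum_inner_mul_inner]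

end TensorIP

/-- `(H, m, u)` is a commutative †-Frobenius monoid: `m` is associative and commutative,
`u 1` is a two-sided unit for `m`, and the Frobenius law
`(m ⊗ id) ∘ (id ⊗ δ) = δ ∘ m` holds, where `δ := m†`. -/
def IsFrobenius (m : H ⊗[ℂ] H →ₗ[ℂ] H) (u : ℂ →ₗ[ℂ] H) : Prop :=
  (m ∘ₗ TensorProduct.map m LinearMap.id
      = m ∘ₗ TensorProduct.map LinearMap.id m ∘ₗ (TensorProduct.assoc ℂ H H H).toLinearMap)
    ∧ (m ∘ₗ (TensorProduct.comm ℂ H H).toLinearMap = m)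
    ∧ (∀ x : H, m (u 1 ⊗ₜ[ℂ] x) = x)
    ∧ (∀ x : H, m (x ⊗ₜ[ℂ] u 1) = x)
    ∧ (TensorProduct.map m LinearMap.id ∘ₗ (TensorProduct.assoc ℂ H H H).symm.toLinearMap
        ∘ₗ TensorProduct.map LinearMap.id (LinearMap.adjoint m)
      = LinearMap.adjoint m ∘ₗ m)

/-- `ψ` is a copyable element: `δ ψ = ψ ⊗ ψ` and `ε ψ = 1`, where `δ := m†`, `ε := u†`. -/
def Copyable (m : H ⊗[ℂ] H →ₗ[ℂ] H) (u : ℂ →ₗ[ℂ] H) (ψ : H) : Prop :=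
  LinearMap.adjoint m ψ = ψ ⊗ₜ[ℂ] ψ ∧ LinearMap.adjoint u ψ = 1


section FrobAux

open LinearMap

variable {X Y : Type*} [NormedAddCommGroup X] [InnerProductSpace ℂ X] [FiniteDimensional ℂ X]
  [NormedAddCommGroup Y] [InnerProductSpace ℂ Y] [FiniteDimensional ℂ Y]

/-- Left multiplication by `x`. -/
def Lmul (m : X ⊗[ℂ] X →ₗ[ℂ] X) (x : X) : X →ₗ[ℂ] X := m ∘ₗ TensorProduct.mk ℂ X X x

@[simp] lemma Lmul_apply (m : X ⊗[ℂ] X →ₗ[ℂ] X) (x y : X) :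
    Lmul m x y = m (x ⊗ₜ[ℂ] y) := rfl

/-- The "conjugation" map associated to a Frobenius structure. -/
def Tc (m : X ⊗[ℂ] X →ₗ[ℂ] X) (u : ℂ →ₗ[ℂ] X) (x : X) : X :=
  LinearMap.adjoint (Lmul m x) (u 1)

variable {m : X ⊗[ℂ] X →ₗ[ℂ] X} {u : ℂ →ₗ[ℂ] X}

lemma frob_comm (hF : IsFrobenius m u) (x y : X) : m (x ⊗ₜ[ℂ] y) = m (y ⊗ₜ[ℂ] x) := by
  simpa using (LinearMap.congr_fun hF.2.1 (y ⊗ₜ[ℂ] x))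

lemma frob_assoc (hF : IsFrobenius m u) (x y z : X) :
    m (m (x ⊗ₜ[ℂ] y) ⊗ₜ[ℂ] z) = m (x ⊗ₜ[ℂ] m (y ⊗ₜ[ℂ] z)) := by
  simpa using (LinearMap.congr_fun hF.1 ((x ⊗ₜ[ℂ] y) ⊗ₜ[ℂ] z))

lemma adjoint_Lmul (hF : IsFrobenius m u) (x : X) :
    LinearMap.adjoint (Lmul m x) = Lmul m (Tc m u x) := by
  symm
  rw [LinearMap.eq_adjoint_iff]
  intro z y
  have key : ∀ w : X ⊗[ℂ] X,
      (@inner ℂ _ InnerProductSpace.toInner (Tc m u x ⊗ₜ[ℂ] z) w : ℂ)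
        = @inner ℂ _ InnerProductSpace.toInner ((u 1) ⊗ₜ[ℂ] z)
            ((TensorProduct.map m LinearMap.id)
              ((TensorProduct.assoc ℂ X X X).symm.toLinearMap (x ⊗ₜ[ℂ] w))) := by
    intro w
    induction w using TensorProduct.induction_on with
    | zero => simp
    | tmul p q =>
        simp only [LinearEquiv.coe_coe, TensorProduct.assoc_symm_tmul, TensorProduct.map_tmul,
          LinearMap.id_apply, TensorIP.inner_tmul]
        congr 1
        simpa [Tc] using LinearMap.adjoint_inner_left (Lmul m x) p (u 1)
    | add w₁ w₂ h1 h2 =>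
        simp only [TensorProduct.tmul_add, map_add, inner_add_right, h1, h2]
  have h1 : (inner ℂ (Lmul m (Tc m u x) z) y : ℂ)
      = @inner ℂ _ InnerProductSpace.toInner (Tc m u x ⊗ₜ[ℂ] z) (LinearMap.adjoint m y) := by
    rw [Lmul_apply, LinearMap.adjoint_inner_right]
  rw [h1, key]
  have h2 : x ⊗ₜ[ℂ] (LinearMap.adjoint m y)
      = (TensorProduct.map LinearMap.id (LinearMap.adjoint m)) (x ⊗ₜ[ℂ] y) := by
    simp
  rw [h2]
  have h3 := LinearMap.congr_fun hF.2.2.2.2 (x ⊗ₜ[ℂ] y)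
  simp only [LinearMap.comp_apply] at h3
  rw [h3, LinearMap.adjoint_inner_right]
  have h4 := hF.2.2.1 z
  -- m (u 1 ⊗ₜ z) = z
  rw [show m ((u 1) ⊗ₜ[ℂ] z) = z from h4]
  rfl

lemma Tc_Tc (hF : IsFrobenius m u) (x : X) : Tc m u (Tc m u x) = x := by
  show LinearMap.adjoint (Lmul m (Tc m u x)) (u 1) = x
  rw [← adjoint_Lmul hF x, LinearMap.adjoint_adjoint]
  simpa using hF.2.2.2.1 x

lemma Tc_mul (hF : IsFrobenius m u) (x y : X) :
    Tc m u (m (x ⊗ₜ[ℂ] y)) = m (Tc m u x ⊗ₜ[ℂ] Tc m u y) := by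
  apply ext_inner_right ℂ
  intro z
  have hL : (inner ℂ (Tc m u (m (x ⊗ₜ[ℂ] y))) z : ℂ) = inner ℂ (u 1) (m (m (x ⊗ₜ[ℂ] y) ⊗ₜ[ℂ] z)) := by
    show (inner ℂ (LinearMap.adjoint (Lmul m (m (x ⊗ₜ[ℂ] y))) (u 1)) z : ℂ) = _
    simpa using LinearMap.adjoint_inner_left (Lmul m (m (x ⊗ₜ[ℂ] y))) z (u 1)
  have hR : (inner ℂ (m (Tc m u x ⊗ₜ[ℂ] Tc m u y)) z : ℂ)
      = inner ℂ (u 1) (m (y ⊗ₜ[ℂ] m (x ⊗ₜ[ℂ] z))) := by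
    have e1 : (inner ℂ (m (Tc m u x ⊗ₜ[ℂ] Tc m u y)) z : ℂ)
        = inner ℂ (Tc m u y) (LinearMap.adjoint (Lmul m (Tc m u x)) z) :=
      (LinearMap.adjoint_inner_right (Lmul m (Tc m u x)) (Tc m u y) z).symm
    rw [e1, ← adjoint_Lmul hF x, LinearMap.adjoint_adjoint]
    show (inner ℂ (Tc m u y) (m (x ⊗ₜ[ℂ] z)) : ℂ) = _
    show (inner ℂ (LinearMap.adjoint (Lmul m y) (u 1)) (m (x ⊗ₜ[ℂ] z)) : ℂ) = _
    simpa using LinearMap.adjoint_inner_left (Lmul m y) (m (x ⊗ₜ[ℂ] z)) (u 1)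
  rw [hL, hR]
  congr 1
  rw [frob_comm hF x y, frob_assoc hF y x z]

lemma frob_reduced (hF : IsFrobenius m u) {x : X} (hx : m (x ⊗ₜ[ℂ] x) = 0) : x = 0 := by
  set a := Tc m u x with ha
  set y := m (a ⊗ₜ[ℂ] x) with hy
  have hTy : Tc m u y = y := by
    rw [hy, Tc_mul hF, Tc_Tc hF, ← ha, frob_comm hF x a]
  have hyadj : LinearMap.adjoint (Lmul m y) = Lmul m y := by
    rw [adjoint_Lmul hF, hTy]
  have hyy : m (y ⊗ₜ[ℂ] y) = 0 := by
    have e1 : m (x ⊗ₜ[ℂ] m (a ⊗ₜ[ℂ] x)) = 0 := by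
      rw [frob_comm hF a x, ← frob_assoc hF x x a, hx]
      simp
    rw [hy, frob_assoc hF a x (m (a ⊗ₜ[ℂ] x)), e1]
    simp
  have hLy2 : ∀ z : X, Lmul m y (Lmul m y z) = 0 := by
    intro z
    simp only [Lmul_apply]
    rw [← frob_assoc hF y y z, hyy]
    simp
  have hLy : ∀ z : X, Lmul m y z = 0 := by
    intro z
    have : (inner ℂ (Lmul m y z) (Lmul m y z) : ℂ) = 0 := by
      have e := LinearMap.adjoint_inner_right (Lmul m y) z (Lmul m y z)
      rw [hyadj] at e
      rw [← e, hLy2]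
      simp
    exact inner_self_eq_zero.mp this
  have hy0 : y = 0 := by
    have := hLy (u 1)
    simp only [Lmul_apply] at this
    rwa [hF.2.2.2.1 y] at this
  have hxx : (inner ℂ x x : ℂ) = 0 := by
    have e0 : (inner ℂ (Lmul m x (u 1)) x : ℂ) = inner ℂ (u 1) (LinearMap.adjoint (Lmul m x) x) := by
      have := LinearMap.adjoint_inner_left (LinearMap.adjoint (Lmul m x)) x (u 1)
      simpa [LinearMap.adjoint_adjoint] using this
    have e1 : Lmul m x (u 1) = x := by simpa using hF.2.2.2.1 x
    rw [e1] at e0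
    rw [e0, adjoint_Lmul hF, Lmul_apply, ← ha, ← hy, hy0]
    simp
  exact inner_self_eq_zero.mp hxx

lemma frob_nondeg (hF : IsFrobenius m u) {x : X}
    (h0 : ∀ y : X, (inner ℂ (u 1) (m (x ⊗ₜ[ℂ] y)) : ℂ) = 0) : x = 0 := by
  have hTx : Tc m u x = 0 := by
    have : (inner ℂ (Tc m u x) (Tc m u x) : ℂ) = 0 := by
      show (inner ℂ (LinearMap.adjoint (Lmul m x) (u 1)) (Tc m u x) : ℂ) = 0
      rw [LinearMap.adjoint_inner_left]
      simpa using h0 (Tc m u x)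
    exact inner_self_eq_zero.mp this
  have := Tc_Tc hF x
  rw [hTx] at this
  rw [← this]
  have hT0 : Tc m u (0 : X) = 0 := by
    have : Lmul m (0 : X) = 0 := by
      apply LinearMap.ext; intro z
      simp [Lmul_apply]
    show LinearMap.adjoint (Lmul m (0 : X)) (u 1) = 0
    rw [this]
    simp
  exact hT0

/-- Powers of `v`: `pw m v n = v^(n+1)`. -/
def pw (m : X ⊗[ℂ] X →ₗ[ℂ] X) (v : X) : ℕ → X
  | 0 => v
  | n + 1 => m (v ⊗ₜ[ℂ] pw m v n)

lemma pw_add (hF : IsFrobenius m u) (v : X) (a b : ℕ) :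
    m (pw m v a ⊗ₜ[ℂ] pw m v b) = pw m v (a + b + 1) := by
  induction a with
  | zero =>
      have e : 0 + b + 1 = b + 1 := by omega
      rw [e]
      rfl
  | succ k ih =>
      show m (m (v ⊗ₜ[ℂ] pw m v k) ⊗ₜ[ℂ] pw m v b) = _
      rw [frob_assoc hF, ih]
      show pw m v (k + b + 1 + 1) = pw m v (k + 1 + b + 1)
      congr 1
      omega

lemma pw_up {v : X} {n : ℕ} (h0 : pw m v n = 0) (j : ℕ) : pw m v (n + j) = 0 := by
  induction j with
  | zero => simpa using h0
  | succ k ih =>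
      show m (v ⊗ₜ[ℂ] pw m v (n + k)) = 0
      rw [ih]
      simp

lemma pw_ne_zero (hF : IsFrobenius m u) {v : X} (hv : v ≠ 0) (n : ℕ) : pw m v n ≠ 0 := by
  induction n using Nat.strong_induction_on with
  | _ n ih =>
    match n with
    | 0 => exact hv
    | Nat.succ k =>
      intro h0
      have hk : pw m v k ≠ 0 := ih k (by omega)
      apply hk
      apply frob_reduced hF
      rw [pw_add hF]
      have e : k + k + 1 = (k + 1) + k := by omega
      rw [e]
      exact pw_up h0 k

lemma adjoint_u_apply (u' : ℂ →ₗ[ℂ] X) (z : X) :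
    LinearMap.adjoint u' z = (inner ℂ (u' 1) z : ℂ) := by
  have h := LinearMap.adjoint_inner_right u' 1 z
  simpa [RCLike.inner_apply] using h

lemma adjoint_tmap (f g : X →ₗ[ℂ] Y) :
    LinearMap.adjoint (TensorProduct.map f g)
      = TensorProduct.map (LinearMap.adjoint f) (LinearMap.adjoint g) := by
  symm
  rw [LinearMap.eq_adjoint_iff]
  intro z w
  induction z using TensorProduct.induction_on with
  | zero => simp
  | tmul a b =>
      induction w using TensorProduct.induction_on with
      | zero => simp
      | tmul c d =>
          simp [TensorProduct.map_tmul, TensorIP.inner_tmul, LinearMap.adjoint_inner_left]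
      | add w1 w2 h1 h2 => simp only [map_add, inner_add_right, h1, h2]
  | add z1 z2 h1 h2 => simp only [map_add, inner_add_left, h1, h2]

lemma frob_endo_id (hF : IsFrobenius m u) (p : X →ₗ[ℂ] Y) (hinj : Function.Injective p)
    (hmul : ∀ x y : X, LinearMap.adjoint p (p (m (x ⊗ₜ[ℂ] y)))
      = m ((LinearMap.adjoint p (p x)) ⊗ₜ[ℂ] (LinearMap.adjoint p (p y)))) :
    LinearMap.adjoint p ∘ₗ p = LinearMap.id := by
  rcases subsingleton_or_nontrivial X with hs | hnt
  · exact LinearMap.ext fun x => Subsingleton.elim _ _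
  set h : X →ₗ[ℂ] X := LinearMap.adjoint p ∘ₗ p with hh
  have hsym : h.IsSymmetric := by
    intro a b
    simp only [hh, LinearMap.comp_apply]
    rw [LinearMap.adjoint_inner_left, LinearMap.adjoint_inner_right]
  have hn : Module.finrank ℂ X = Module.finrank ℂ X := rfl
  set B := hsym.eigenvectorBasis hn with hB
  set μ := hsym.eigenvalues hn with hμ
  have happly : ∀ i, h (B i) = (μ i : ℂ) • B i := fun i =>
    hsym.apply_eigenvectorBasis hn i
  have hBne : ∀ i, B i ≠ 0 := fun i => B.orthonormal.ne_zero i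
  have hpBne : ∀ i, p (B i) ≠ 0 := by
    intro i hc
    exact hBne i (hinj (by simp [hc]))
  have hpos : ∀ i, 0 < μ i := by
    intro i
    have h1 : (inner ℂ (B i) (h (B i)) : ℂ) = (μ i : ℂ) := by
      rw [happly, inner_smul_right, inner_self_eq_norm_sq_to_K]
      have : ‖B i‖ = 1 := B.orthonormal.1 i
      rw [this]
      norm_num
    have h2 : (inner ℂ (B i) (h (B i)) : ℂ) = inner ℂ (p (B i)) (p (B i)) := by
      simp only [hh, LinearMap.comp_apply]
      rw [LinearMap.adjoint_inner_right]
    have h4 : μ i = ‖p (B i)‖ ^ 2 := by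
      have h3 := h1.symm.trans h2
      rw [inner_self_eq_norm_sq_to_K] at h3
      rw [← RCLike.ofReal_pow] at h3
      exact RCLike.ofReal_inj.mp h3
    rw [h4]
    exact pow_pos (norm_pos_iff.mpr (hpBne i)) 2
  have heig : ∀ (c : ℝ) (w : X), w ≠ 0 → h w = (c : ℂ) • w → ∃ j, μ j = c := by
    intro c w hw hcw
    have hex : ∃ j, (inner ℂ (B j) w : ℂ) ≠ 0 := by
      by_contra hall
      push_neg at hall
      apply hw
      rw [← B.sum_repr' w]
      refine Finset.sum_eq_zero fun j _ => ?_
      rw [hall j]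
      simp
    obtain ⟨j, hj⟩ := hex
    refine ⟨j, ?_⟩
    have h1 : (inner ℂ (B j) (h w) : ℂ) = (μ j : ℂ) * inner ℂ (B j) w := by
      rw [← hsym (B j) w, happly, inner_smul_left, Complex.conj_ofReal]
    have h2 : (inner ℂ (B j) (h w) : ℂ) = (c : ℂ) * inner ℂ (B j) w := by
      rw [hcw, inner_smul_right]
    have h3 : (μ j : ℂ) = (c : ℂ) := mul_right_cancel₀ hj (h1.symm.trans h2)
    exact_mod_cast h3
  have hone : ∀ i, μ i = 1 := by
    intro i
    have hmulh : ∀ x y : X, h (m (x ⊗ₜ[ℂ] y)) = m (h x ⊗ₜ[ℂ] h y) := by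
      intro x y
      simp only [hh, LinearMap.comp_apply]
      exact hmul x y
    have hpw : ∀ n : ℕ, h (pw m (B i) n) = ((μ i ^ (n + 1) : ℝ) : ℂ) • pw m (B i) n := by
      intro n
      induction n with
      | zero =>
          show h (B i) = ((μ i ^ 1 : ℝ) : ℂ) • B i
          rw [happly]
          norm_num
      | succ k ihk =>
          show h (m (B i ⊗ₜ[ℂ] pw m (B i) k)) = _
          rw [hmulh, happly, ihk]
          have e : ((μ i : ℂ) • B i) ⊗ₜ[ℂ] (((μ i ^ (k + 1) : ℝ) : ℂ) • pw m (B i) k)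
              = ((μ i : ℂ) * ((μ i ^ (k + 1) : ℝ) : ℂ)) • (B i ⊗ₜ[ℂ] pw m (B i) k) := by
            rw [← TensorProduct.smul_tmul', TensorProduct.tmul_smul, smul_smul]
          rw [e, map_smul]
          show _ = ((μ i ^ (k + 2) : ℝ) : ℂ) • m (B i ⊗ₜ[ℂ] pw m (B i) k)
          congr 1
          push_cast
          ring
    have hch : ∀ n : ℕ, ∃ j, μ j = μ i ^ (n + 1) := fun n =>
      heig _ _ (pw_ne_zero hF (hBne i) n) (hpw n)
    choose F hF2 using hch
    obtain ⟨a, b, hab, hFab⟩ := Finite.exists_ne_map_eq_of_infinite F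
    have hpow : μ i ^ (a + 1) = μ i ^ (b + 1) := by rw [← hF2 a, ← hF2 b, hFab]
    by_contra hne
    rcases lt_trichotomy (μ i) 1 with hlt | heq | hgt
    · rcases lt_or_gt_of_ne hab with hab' | hab'
      · exact absurd hpow (ne_of_gt (pow_lt_pow_right_of_lt_one₀ (hpos i) hlt (by omega)))
      · exact absurd hpow (ne_of_lt (pow_lt_pow_right_of_lt_one₀ (hpos i) hlt (by omega)))
    · exact hne heq
    · rcases lt_or_gt_of_ne hab with hab' | hab'
      · exact absurd hpow (ne_of_lt (pow_lt_pow_right₀ hgt (by omega)))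
      · exact absurd hpow (ne_of_gt (pow_lt_pow_right₀ hgt (by omega)))
  refine B.toBasis.ext fun i => ?_
  rw [OrthonormalBasis.coe_toBasis, happly, hone]
  simp

end FrobAux

/-- A linear map between commutative †-Frobenius monoids preserving all of the Frobenius
structure is unitary. -/
theorem frobenius_hom_unitary
    {K : Type*} [NormedAddCommGroup K] [InnerProductSpace ℂ K] [FiniteDimensional ℂ K]
    (mH : H ⊗[ℂ] H →ₗ[ℂ] H) (uH : ℂ →ₗ[ℂ] H) (mK : K ⊗[ℂ] K →ₗ[ℂ] K) (uK : ℂ →ₗ[ℂ] K)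
    (hH : IsFrobenius mH uH) (hK : IsFrobenius mK uK)
    (f : H →ₗ[ℂ] K)
    (hm : f ∘ₗ mH = mK ∘ₗ TensorProduct.map f f)
    (hu : f (uH 1) = uK 1)
    (hδ : LinearMap.adjoint mK ∘ₗ f = TensorProduct.map f f ∘ₗ LinearMap.adjoint mH)
    (hε : LinearMap.adjoint uK ∘ₗ f = LinearMap.adjoint uH) :
    LinearMap.adjoint f ∘ₗ f = LinearMap.id ∧ f ∘ₗ LinearMap.adjoint f = LinearMap.id := by
  classical
  have hm' : ∀ x y : H, f (mH (x ⊗ₜ[ℂ] y)) = mK (f x ⊗ₜ[ℂ] f y) := fun x y => by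
    simpa using LinearMap.congr_fun hm (x ⊗ₜ[ℂ] y)
  have hmadj : LinearMap.adjoint f ∘ₗ mK
      = mH ∘ₗ TensorProduct.map (LinearMap.adjoint f) (LinearMap.adjoint f) := by
    have h := congrArg LinearMap.adjoint hδ
    rwa [LinearMap.adjoint_comp, LinearMap.adjoint_comp, LinearMap.adjoint_adjoint,
      LinearMap.adjoint_adjoint, adjoint_tmap] at h
  have hm'' : ∀ a b : K, LinearMap.adjoint f (mK (a ⊗ₜ[ℂ] b))
      = mH (LinearMap.adjoint f a ⊗ₜ[ℂ] LinearMap.adjoint f b) := fun a b => by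
    simpa using LinearMap.congr_fun hmadj (a ⊗ₜ[ℂ] b)
  have hufK : f ∘ₗ uH = uK := LinearMap.ext_ring (by simpa using hu)
  have hεK : LinearMap.adjoint uH ∘ₗ LinearMap.adjoint f = LinearMap.adjoint uK := by
    have h := congrArg LinearMap.adjoint hufK
    rwa [LinearMap.adjoint_comp] at h
  have hfinj : Function.Injective f := by
    rw [injective_iff_map_eq_zero]
    intro x hx
    apply frob_nondeg hH
    intro y
    rw [← adjoint_u_apply uH (mH (x ⊗ₜ[ℂ] y)), ← LinearMap.congr_fun hε (mH (x ⊗ₜ[ℂ] y))]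
    simp only [LinearMap.comp_apply]
    rw [hm' x y, hx]
    simp
  have hfainj : Function.Injective (LinearMap.adjoint f) := by
    rw [injective_iff_map_eq_zero]
    intro x hx
    apply frob_nondeg hK
    intro y
    rw [← adjoint_u_apply uK (mK (x ⊗ₜ[ℂ] y)), ← LinearMap.congr_fun hεK (mK (x ⊗ₜ[ℂ] y))]
    simp only [LinearMap.comp_apply]
    rw [hm'' x y, hx]
    simp
  constructor
  · apply frob_endo_id hH f hfinj
    intro x y
    rw [hm' x y, hm'' (f x) (f y)]
  · have h2 := frob_endo_id hK (LinearMap.adjoint f)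
      hfainj (fun x y => by
        rw [LinearMap.adjoint_adjoint, hm'' x y,
          hm' (LinearMap.adjoint f x) (LinearMap.adjoint f y)])
    rwa [LinearMap.adjoint_adjoint] at h2
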